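/- Let φ be a density on {-1,1}^n, x₁,...,x_m i.i.d. samples from φ, Δ(X) = avg_{s<t} ∑_{1≤|S|≤k} x_s^S x_t^S, μ = ∑_{1≤|S|≤k} φ̂(S)², and L_k(φ) = ∑_{1≤|S₁|,|S₂|≤k} φ̂(S₁⊕S₂)². Then Var[Δ(X)] ≤ (4/m²)·L_k(φ) + (4/m)·sqrt(L_k(φ))·μ. -/

import Mathlib

open Finset

noncomputable def sgn (b : Bool) : ℝ := if b then 1 else -1

noncomputable def chi {n : ℕ} (S : Finset (Fin n)) (x : Fin n → Bool) : ℝ :=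
  ∏ i ∈ S, sgn (x i)

/-- Expectation under the uniform distribution on `{-1,1}^n`. -/
noncomputable def expect {n : ℕ} (f : (Fin n → Bool) → ℝ) : ℝ :=
  (∑ x : Fin n → Bool, f x) / 2 ^ n

/-- Fourier coefficient `f̂(S) = E_x[f(x) x^S]`. -/
noncomputable def coeff {n : ℕ} (f : (Fin n → Bool) → ℝ) (S : Finset (Fin n)) : ℝ :=
  expect (fun x => f x * chi S x)

/-- A density function: nonnegative with mean 1 under the uniform measure. -/
def IsDensity {n : ℕ} (φ : (Fin n → Bool) → ℝ) : Prop :=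
  (∀ x, 0 ≤ φ x) ∧ expect φ = 1

/-- Total variation distance between densities: `(1/2) E_x |φ - ψ|`. -/
noncomputable def dTV {n : ℕ} (φ ψ : (Fin n → Bool) → ℝ) : ℝ :=
  expect (fun x => |φ x - ψ x|) / 2

/-- The nonempty sets of size at most `k`. -/
noncomputable def lowSets (n k : ℕ) : Finset (Finset (Fin n)) :=
  Finset.univ.filter fun S => 1 ≤ S.card ∧ S.card ≤ k

/-- Expectation of `f` over `m` i.i.d. samples drawn from the density `φ`. -/
noncomputable def eprod {n : ℕ} (φ : (Fin n → Bool) → ℝ) (m : ℕ)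
    (f : (Fin m → Fin n → Bool) → ℝ) : ℝ :=
  (∑ X : Fin m → Fin n → Bool, (∏ s, φ (X s)) * f X) / (2 : ℝ) ^ (n * m)

/-- `Δ(X) = avg_{s<t} ∑_{1 ≤ |S| ≤ k} (x_s)^S (x_t)^S`. -/
noncomputable def Delta (n k m : ℕ) (X : Fin m → Fin n → Bool) : ℝ :=
  (∑ p ∈ Finset.univ.filter (fun p : Fin m × Fin m => p.1 < p.2),
    ∑ S ∈ lowSets n k, chi S (X p.1) * chi S (X p.2)) / (m.choose 2 : ℝ)

noncomputable def E1 {n : ℕ} (φ g : (Fin n → Bool) → ℝ) : ℝ := expect (fun x => φ x * g x)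

lemma sgn_sq (b : Bool) : sgn b * sgn b = 1 := by cases b <;> simp [sgn]

lemma chi_mul_chi {n : ℕ} (S T : Finset (Fin n)) (x : Fin n → Bool) :
    chi S x * chi T x = chi (symmDiff S T) x := by
  classical
  have hS : chi S x = (∏ i ∈ S \ T, sgn (x i)) * ∏ i ∈ S ∩ T, sgn (x i) := by
    rw [chi, ← Finset.prod_sdiff (Finset.inter_subset_left : S ∩ T ⊆ S),
      Finset.sdiff_inter_self_left]
  have hT : chi T x = (∏ i ∈ T \ S, sgn (x i)) * ∏ i ∈ S ∩ T, sgn (x i) := by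
    rw [chi, ← Finset.prod_sdiff (Finset.inter_subset_left : T ∩ S ⊆ T),
      Finset.sdiff_inter_self_left, Finset.inter_comm T S]
  have hmid : (∏ i ∈ S ∩ T, sgn (x i)) * ∏ i ∈ S ∩ T, sgn (x i) = 1 := by
    rw [← Finset.prod_mul_distrib]
    exact Finset.prod_eq_one fun i _ => sgn_sq (x i)
  have hsd : chi (symmDiff S T) x = (∏ i ∈ S \ T, sgn (x i)) * ∏ i ∈ T \ S, sgn (x i) := by
    rw [chi, symmDiff_def, Finset.sup_eq_union,
      Finset.prod_union disjoint_sdiff_sdiff]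
  rw [hS, hT, hsd]
  calc (∏ i ∈ S \ T, sgn (x i)) * (∏ i ∈ S ∩ T, sgn (x i)) *
        ((∏ i ∈ T \ S, sgn (x i)) * ∏ i ∈ S ∩ T, sgn (x i))
      = ((∏ i ∈ S \ T, sgn (x i)) * ∏ i ∈ T \ S, sgn (x i)) *
        ((∏ i ∈ S ∩ T, sgn (x i)) * ∏ i ∈ S ∩ T, sgn (x i)) := by ring
    _ = _ := by rw [hmid, mul_one]

lemma E1_chi {n : ℕ} (φ : (Fin n → Bool) → ℝ) (S : Finset (Fin n)) :
    E1 φ (chi S) = coeff φ S := rfl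

lemma E1_chi_mul {n : ℕ} (φ : (Fin n → Bool) → ℝ) (S T : Finset (Fin n)) :
    E1 φ (fun x => chi S x * chi T x) = coeff φ (symmDiff S T) := by
  unfold E1 coeff
  congr 1
  funext x
  show φ x * (chi S x * chi T x) = φ x * chi (symmDiff S T) x
  rw [chi_mul_chi]

lemma E1_one {n : ℕ} {φ : (Fin n → Bool) → ℝ} (hφ : IsDensity φ) :
    E1 φ (fun _ => 1) = 1 := by
  have : (fun x => φ x * 1) = φ := by funext x; rw [mul_one]
  rw [E1, this, hφ.2]

lemma eprod_prod {n m : ℕ} (φ : (Fin n → Bool) → ℝ) (f : Fin m → (Fin n → Bool) → ℝ) :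
    eprod φ m (fun X => ∏ u, f u (X u)) = ∏ u, E1 φ (f u) := by
  have h2 : (∏ u : Fin m, ∑ y : Fin n → Bool, φ y * f u y)
      = ∑ X : Fin m → Fin n → Bool, ∏ s, (φ (X s) * f s (X s)) := by
    rw [Finset.prod_univ_sum (fun _ => (univ : Finset (Fin n → Bool)))
      (fun s y => φ y * f s y), Fintype.piFinset_univ]
  unfold eprod E1 _root_.expect
  rw [Finset.prod_div_distrib, Finset.prod_const, card_univ, Fintype.card_fin, ← pow_mul, h2]
  congr 1
  exact Finset.sum_congr rfl fun X _ => Finset.prod_mul_distrib.symm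

lemma eprod_sum {n m : ℕ} {ι : Type*} (φ : (Fin n → Bool) → ℝ) (t : Finset ι)
    (f : ι → (Fin m → Fin n → Bool) → ℝ) :
    eprod φ m (fun X => ∑ i ∈ t, f i X) = ∑ i ∈ t, eprod φ m (f i) := by
  unfold eprod
  rw [← Finset.sum_div]
  congr 1
  simp_rw [Finset.mul_sum]
  rw [Finset.sum_comm]

lemma eprod_div {n m : ℕ} (φ : (Fin n → Bool) → ℝ) (c : ℝ)
    (f : (Fin m → Fin n → Bool) → ℝ) :
    eprod φ m (fun X => f X / c) = eprod φ m f / c := by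
  unfold eprod
  rw [div_right_comm]
  congr 1
  rw [Finset.sum_div]
  apply Finset.sum_congr rfl
  intro X _
  show (∏ s, φ (X s)) * (f X / c) = ((∏ s, φ (X s)) * f X) / c
  ring

lemma prod_two_support {M : Type*} [CommMonoid M] {m : ℕ} {a b : Fin m} (hab : a ≠ b)
    (F : Fin m → M) (h1 : ∀ u, u ≠ a → u ≠ b → F u = 1) :
    ∏ u, F u = F a * F b := by
  have h2 : ∏ u ∈ (univ.erase a).erase b, F u = 1 := by
    apply Finset.prod_eq_one
    intro u hu
    simp only [Finset.mem_erase, Finset.mem_univ, and_true] at hu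
    exact h1 u hu.2 hu.1
  rw [← Finset.mul_prod_erase univ F (mem_univ a),
    ← Finset.mul_prod_erase (univ.erase a) F
      (show b ∈ univ.erase a by simp [hab.symm]),
    h2, mul_one]

lemma prod_three_support {M : Type*} [CommMonoid M] {m : ℕ} {a b c : Fin m}
    (hab : a ≠ b) (hac : a ≠ c) (hbc : b ≠ c)
    (F : Fin m → M) (h1 : ∀ u, u ≠ a → u ≠ b → u ≠ c → F u = 1) :
    ∏ u, F u = F a * (F b * F c) := by
  have h2 : ∏ u ∈ ((univ.erase a).erase b).erase c, F u = 1 := by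
    apply Finset.prod_eq_one
    intro u hu
    simp only [Finset.mem_erase, Finset.mem_univ, and_true] at hu
    exact h1 u hu.2.2 hu.2.1 hu.1
  rw [← Finset.mul_prod_erase univ F (mem_univ a),
    ← Finset.mul_prod_erase (univ.erase a) F
      (show b ∈ univ.erase a by simp [hab.symm]),
    ← Finset.mul_prod_erase ((univ.erase a).erase b) F
      (show c ∈ (univ.erase a).erase b by simp [hac.symm, hbc.symm]),
    h2, mul_one]

lemma prod_four_support {M : Type*} [CommMonoid M] {m : ℕ} {a b c d : Fin m}
    (hab : a ≠ b) (hac : a ≠ c) (had : a ≠ d) (hbc : b ≠ c) (hbd : b ≠ d) (hcd : c ≠ d)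
    (F : Fin m → M) (h1 : ∀ u, u ≠ a → u ≠ b → u ≠ c → u ≠ d → F u = 1) :
    ∏ u, F u = F a * (F b * (F c * F d)) := by
  have h2 : ∏ u ∈ (((univ.erase a).erase b).erase c).erase d, F u = 1 := by
    apply Finset.prod_eq_one
    intro u hu
    simp only [Finset.mem_erase, Finset.mem_univ, and_true] at hu
    exact h1 u hu.2.2.2 hu.2.2.1 hu.2.1 hu.1
  rw [← Finset.mul_prod_erase univ F (mem_univ a),
    ← Finset.mul_prod_erase (univ.erase a) F
      (show b ∈ univ.erase a by simp [hab.symm]),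
    ← Finset.mul_prod_erase ((univ.erase a).erase b) F
      (show c ∈ (univ.erase a).erase b by simp [hac.symm, hbc.symm]),
    ← Finset.mul_prod_erase (((univ.erase a).erase b).erase c) F
      (show d ∈ ((univ.erase a).erase b).erase c by simp [had.symm, hbd.symm, hcd.symm]),
    h2, mul_one]

lemma eprod_pt2 {n m : ℕ} {φ : (Fin n → Bool) → ℝ} (hφ : IsDensity φ)
    {a b : Fin m} (hab : a ≠ b) (g h : (Fin n → Bool) → ℝ) :
    eprod φ m (fun X => g (X a) * h (X b)) = E1 φ g * E1 φ h := by
  classical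
  set f : Fin m → (Fin n → Bool) → ℝ :=
    fun u => if u = a then g else if u = b then h else fun _ => 1 with hf
  have hfa : f a = g := by simp [hf]
  have hfb : f b = h := by simp [hf, hab.symm]
  have hfo : ∀ u, u ≠ a → u ≠ b → f u = fun _ => 1 := by
    intro u h1 h2; simp [hf, h1, h2]
  have key := eprod_prod φ f
  have hL : (fun X : Fin m → Fin n → Bool => ∏ u, f u (X u))
      = fun X => g (X a) * h (X b) := by
    funext X
    rw [prod_two_support hab (fun u => f u (X u))
      (fun u h1 h2 => by show f u (X u) = 1; rw [hfo u h1 h2]), hfa, hfb]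
  rw [hL] at key
  rw [key, prod_two_support hab (fun u => E1 φ (f u))
    (fun u h1 h2 => by show E1 φ (f u) = 1; rw [hfo u h1 h2]; exact E1_one hφ), hfa, hfb]

lemma eprod_pt3 {n m : ℕ} {φ : (Fin n → Bool) → ℝ} (hφ : IsDensity φ)
    {a b c : Fin m} (hab : a ≠ b) (hac : a ≠ c) (hbc : b ≠ c)
    (g h k : (Fin n → Bool) → ℝ) :
    eprod φ m (fun X => g (X a) * (h (X b) * k (X c))) = E1 φ g * (E1 φ h * E1 φ k) := by
  classical
  set f : Fin m → (Fin n → Bool) → ℝ :=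
    fun u => if u = a then g else if u = b then h else if u = c then k else fun _ => 1 with hf
  have hfa : f a = g := by simp [hf]
  have hfb : f b = h := by simp [hf, hab.symm]
  have hfc : f c = k := by simp [hf, hac.symm, hbc.symm]
  have hfo : ∀ u, u ≠ a → u ≠ b → u ≠ c → f u = fun _ => 1 := by
    intro u h1 h2 h3; simp [hf, h1, h2, h3]
  have key := eprod_prod φ f
  have hLf : (fun X : Fin m → Fin n → Bool => ∏ u, f u (X u))
      = fun X => g (X a) * (h (X b) * k (X c)) := by
    funext X
    rw [prod_three_support hab hac hbc (fun u => f u (X u))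
      (fun u h1 h2 h3 => by show f u (X u) = 1; rw [hfo u h1 h2 h3]), hfa, hfb, hfc]
  rw [hLf] at key
  rw [key, prod_three_support hab hac hbc (fun u => E1 φ (f u))
    (fun u h1 h2 h3 => by show E1 φ (f u) = 1; rw [hfo u h1 h2 h3]; exact E1_one hφ), hfa, hfb, hfc]

lemma eprod_pt4 {n m : ℕ} {φ : (Fin n → Bool) → ℝ} (hφ : IsDensity φ)
    {a b c d : Fin m} (hab : a ≠ b) (hac : a ≠ c) (had : a ≠ d)
    (hbc : b ≠ c) (hbd : b ≠ d) (hcd : c ≠ d)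
    (g h k l : (Fin n → Bool) → ℝ) :
    eprod φ m (fun X => g (X a) * (h (X b) * (k (X c) * l (X d))))
      = E1 φ g * (E1 φ h * (E1 φ k * E1 φ l)) := by
  classical
  set f : Fin m → (Fin n → Bool) → ℝ :=
    fun u => if u = a then g else if u = b then h else if u = c then k
      else if u = d then l else fun _ => 1 with hf
  have hfa : f a = g := by simp [hf]
  have hfb : f b = h := by simp [hf, hab.symm]
  have hfc : f c = k := by simp [hf, hac.symm, hbc.symm]
  have hfd : f d = l := by simp [hf, had.symm, hbd.symm, hcd.symm]
  have hfo : ∀ u, u ≠ a → u ≠ b → u ≠ c → u ≠ d → f u = fun _ => 1 := by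
    intro u h1 h2 h3 h4; simp [hf, h1, h2, h3, h4]
  have key := eprod_prod φ f
  have hLf : (fun X : Fin m → Fin n → Bool => ∏ u, f u (X u))
      = fun X => g (X a) * (h (X b) * (k (X c) * l (X d))) := by
    funext X
    rw [prod_four_support hab hac had hbc hbd hcd (fun u => f u (X u))
      (fun u h1 h2 h3 h4 => by show f u (X u) = 1; rw [hfo u h1 h2 h3 h4]), hfa, hfb, hfc, hfd]
  rw [hLf] at key
  rw [key, prod_four_support hab hac had hbc hbd hcd (fun u => E1 φ (f u))
    (fun u h1 h2 h3 h4 => by show E1 φ (f u) = 1; rw [hfo u h1 h2 h3 h4]; exact E1_one hφ), hfa, hfb, hfc, hfd]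

lemma two_card_P (m : ℕ) :
    2 * ((univ : Finset (Fin m × Fin m)).filter (fun p => p.1 < p.2)).card
      = m * m - m := by
  classical
  set P := (univ : Finset (Fin m × Fin m)).filter (fun p => p.1 < p.2) with hP
  set Q := (univ : Finset (Fin m × Fin m)).filter (fun p => p.2 < p.1) with hQ
  have hPQ : P.card = Q.card := by
    apply Finset.card_nbij' Prod.swap Prod.swap
    · intro p hp
      simp only [hP, hQ, Finset.mem_coe, Finset.mem_filter, Finset.mem_univ, true_and] at hp ⊢
      exact hp
    · intro p hp
      simp only [hP, hQ, Finset.mem_coe, Finset.mem_filter, Finset.mem_univ, true_and] at hp ⊢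
      exact hp
    · intro p _; exact Prod.swap_swap p
    · intro p _; exact Prod.swap_swap p
  have hdisj : Disjoint P Q := by
    rw [hP, hQ]
    exact Finset.disjoint_filter.2 fun x _ h h' => absurd h' (not_lt.2 h.le)
  have hU : P ∪ Q = (univ : Finset (Fin m)).offDiag := by
    ext p
    simp only [hP, hQ, Finset.mem_union, Finset.mem_filter, Finset.mem_univ, true_and,
      Finset.mem_offDiag, and_true]
    exact lt_or_lt_iff_ne
  have hcu := Finset.card_union_of_disjoint hdisj
  rw [hU, Finset.offDiag_card, card_univ, Fintype.card_fin, ← hPQ] at hcu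
  omega

lemma card_P_real (m : ℕ) :
    ((((univ : Finset (Fin m × Fin m)).filter (fun p => p.1 < p.2)).card : ℝ))
      = m * ((m : ℝ) - 1) / 2 := by
  have h := two_card_P m
  have hm' : m ≤ m * m := by nlinarith
  have h2 : (2 : ℝ) * (((univ : Finset (Fin m × Fin m)).filter
      (fun p => p.1 < p.2)).card : ℝ) = (m : ℝ) * m - m := by
    have := congrArg (Nat.cast : ℕ → ℝ) h
    push_cast [Nat.cast_sub hm'] at this
    exact this
  linarith

lemma card_neighbors {m : ℕ} (p : Fin m × Fin m) (hp : p.1 < p.2) :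
    ((((univ : Finset (Fin m × Fin m)).filter (fun q => q.1 < q.2)).erase p).filter
      (fun q => q.1 = p.1 ∨ q.1 = p.2 ∨ q.2 = p.1 ∨ q.2 = p.2)).card
      ≤ 2 * (m - 1) := by
  classical
  have hcard : ((({p.1, p.2} : Finset (Fin m)) ×ˢ ((univ : Finset (Fin m)).erase p.1)).card)
      = 2 * (m - 1) := by
    rw [Finset.card_product, Finset.card_pair hp.ne, Finset.card_erase_of_mem (mem_univ _),
      card_univ, Fintype.card_fin]
  rw [← hcard]
  apply Finset.card_le_card_of_injOn
    (fun q => if q.1 = p.1 ∨ q.1 = p.2 then (q.1, q.2) else (q.2, q.1))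
  · intro q hq
    simp only [Finset.mem_coe, Finset.mem_filter, Finset.mem_erase, Finset.mem_univ, true_and,
      and_true] at hq
    obtain ⟨⟨hqp, hqlt⟩, hsh⟩ := hq
    by_cases hcond : q.1 = p.1 ∨ q.1 = p.2
    · simp only [Finset.mem_coe]
      rw [if_pos hcond]
      rw [Finset.mem_product, Finset.mem_insert, Finset.mem_singleton, Finset.mem_erase]
      refine ⟨hcond, ?_, mem_univ _⟩
      rcases hcond with h | h
      · exact ne_of_gt (h ▸ hqlt)
      · exact ne_of_gt (lt_trans hp (h ▸ hqlt))
    · simp only [Finset.mem_coe]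
      rw [if_neg hcond]
      push_neg at hcond
      have hq2 : q.2 = p.1 ∨ q.2 = p.2 := by tauto
      rw [Finset.mem_product, Finset.mem_insert, Finset.mem_singleton, Finset.mem_erase]
      exact ⟨hq2, hcond.1, mem_univ _⟩
  · intro q hq q' hq' heq
    simp only [Finset.mem_coe, Finset.mem_filter, Finset.mem_erase, Finset.mem_univ,
      true_and, and_true] at hq hq'
    obtain ⟨⟨hqp, hqlt⟩, _⟩ := hq
    obtain ⟨⟨hqp', hqlt'⟩, _⟩ := hq'
    dsimp only at heq
    by_cases h1 : q.1 = p.1 ∨ q.1 = p.2 <;> by_cases h2 : q'.1 = p.1 ∨ q'.1 = p.2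
    · rw [if_pos h1, if_pos h2] at heq
      have := Prod.ext_iff.1 heq
      exact Prod.ext_iff.2 ⟨this.1, this.2⟩
    · rw [if_pos h1, if_neg h2] at heq
      have e1 : q.1 = q'.2 := (Prod.ext_iff.1 heq).1
      have e2 : q.2 = q'.1 := (Prod.ext_iff.1 heq).2
      have : q.1 < q.1 := by
        calc q.1 < q.2 := hqlt
          _ = q'.1 := e2
          _ < q'.2 := hqlt'
          _ = q.1 := e1.symm
      exact absurd this (lt_irrefl _)
    · rw [if_neg h1, if_pos h2] at heq
      have e1 : q.2 = q'.1 := (Prod.ext_iff.1 heq).1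
      have e2 : q.1 = q'.2 := (Prod.ext_iff.1 heq).2
      have : q.1 < q.1 := by
        calc q.1 < q.2 := hqlt
          _ = q'.1 := e1
          _ < q'.2 := hqlt'
          _ = q.1 := e2.symm
      exact absurd this (lt_irrefl _)
    · rw [if_neg h1, if_neg h2] at heq
      have := Prod.ext_iff.1 heq
      exact Prod.ext_iff.2 ⟨this.2, this.1⟩

set_option maxHeartbeats 2000000 in
theorem stmt12 {n k m : ℕ} (hm : 2 ≤ m) (φ : (Fin n → Bool) → ℝ)
    (hφ : IsDensity φ) (μ L : ℝ)
    (hμ : μ = ∑ S ∈ lowSets n k, (coeff φ S) ^ 2)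
    (hL : L = ∑ S₁ ∈ lowSets n k, ∑ S₂ ∈ lowSets n k, (coeff φ (symmDiff S₁ S₂)) ^ 2) :
    eprod φ m (fun X => (Delta n k m X) ^ 2) - (eprod φ m (Delta n k m)) ^ 2 ≤
      4 / (m : ℝ) ^ 2 * L + 4 / (m : ℝ) * Real.sqrt L * μ := by
  have hL0 : 0 ≤ L := by
    rw [hL]
    exact Finset.sum_nonneg fun S _ => Finset.sum_nonneg fun T _ => sq_nonneg _
  have hμ0 : 0 ≤ μ := by
    rw [hμ]
    exact Finset.sum_nonneg fun S _ => sq_nonneg _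
  have hSQ0 : 0 ≤ Real.sqrt L * μ := mul_nonneg (Real.sqrt_nonneg L) hμ0
  set ls : Finset (Finset (Fin n)) := lowSets n k with hls
  set P : Finset (Fin m × Fin m) :=
    Finset.univ.filter (fun p : Fin m × Fin m => p.1 < p.2) with hPdef
  set c : ℝ := (m.choose 2 : ℝ) with hcdef
  set M : ℝ := (m : ℝ) with hM
  have hM2 : (2 : ℝ) ≤ M := by rw [hM]; exact_mod_cast hm
  have hMpos : (0 : ℝ) < M := by linarith
  have hcval : c = M * (M - 1) / 2 := by rw [hcdef, hM, Nat.cast_choose_two]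
  have hcpos : 0 < c := by rw [hcval]; nlinarith
  have hcard : (P.card : ℝ) = c := by rw [hPdef, card_P_real, hcval, hM]
  set A : Fin m × Fin m → (Fin m → Fin n → Bool) → ℝ :=
    fun p X => ∑ S ∈ ls, chi S (X p.1) * chi S (X p.2) with hA
  have hDelta : Delta n k m = fun X => (∑ p ∈ P, A p X) / c := rfl
  -- expectation of a single pair term
  have hEA : ∀ p ∈ P, eprod φ m (A p) = μ := by
    intro p hp
    have hp' := hp
    rw [hPdef] at hp'
    have hpd : p.1 ≠ p.2 := ne_of_lt (Finset.mem_filter.1 hp').2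
    have h1 : eprod φ m (A p)
        = ∑ S ∈ ls, eprod φ m (fun X => chi S (X p.1) * chi S (X p.2)) :=
      eprod_sum φ ls (fun S X => chi S (X p.1) * chi S (X p.2))
    rw [h1, hμ]
    refine Finset.sum_congr rfl fun S _ => ?_
    rw [eprod_pt2 hφ hpd (chi S) (chi S), E1_chi, ← pow_two]
  have hED : eprod φ m (Delta n k m) = μ := by
    rw [hDelta, eprod_div φ c (fun X => ∑ p ∈ P, A p X), eprod_sum φ P A,
      Finset.sum_congr rfl hEA, Finset.sum_const, nsmul_eq_mul, hcard, mul_comm,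
      mul_div_assoc, div_self (ne_of_gt hcpos), mul_one]
  -- the second moment kernel
  set e : Fin m × Fin m → Fin m × Fin m → ℝ := fun p q => ∑ S ∈ ls, ∑ T ∈ ls,
    eprod φ m (fun X => chi S (X p.1) * chi S (X p.2) * (chi T (X q.1) * chi T (X q.2)))
    with he
  have hsq2 : eprod φ m (fun X => (Delta n k m X) ^ 2)
      = (∑ p ∈ P, ∑ q ∈ P, e p q) / c ^ 2 := by
    have hfun : (fun X => (Delta n k m X) ^ 2)
        = fun X : Fin m → Fin n → Bool => (∑ p ∈ P, ∑ q ∈ P, ∑ S ∈ ls, ∑ T ∈ ls,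
            chi S (X p.1) * chi S (X p.2) * (chi T (X q.1) * chi T (X q.2))) / c ^ 2 := by
      funext X
      simp only [hDelta]
      rw [div_pow, pow_two (∑ p ∈ P, A p X),
        Finset.sum_mul_sum P P (fun p => A p X) (fun q => A q X)]
      congr 1
      refine Finset.sum_congr rfl fun p _ => Finset.sum_congr rfl fun q _ => ?_
      simp only [hA]
      exact Finset.sum_mul_sum ls ls _ _
    rw [hfun, eprod_div φ (c ^ 2) _]
    congr 1
    rw [eprod_sum φ P _]
    refine Finset.sum_congr rfl fun p _ => ?_
    rw [eprod_sum φ P _]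
    refine Finset.sum_congr rfl fun q _ => ?_
    rw [eprod_sum φ ls _]
    simp only [he]
    refine Finset.sum_congr rfl fun S _ => ?_
    exact eprod_sum φ ls _
  set W : ℝ := ∑ S ∈ ls, ∑ T ∈ ls, coeff φ (symmDiff S T) * (coeff φ S * coeff φ T)
    with hW
  -- diagonal value
  have hdiag : ∀ p ∈ P, e p p = L := by
    intro p hp
    have hp' := hp
    rw [hPdef] at hp'
    have hpd : p.1 ≠ p.2 := ne_of_lt (Finset.mem_filter.1 hp').2
    simp only [he]
    rw [hL]
    refine Finset.sum_congr rfl fun S _ => Finset.sum_congr rfl fun T _ => ?_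
    have h3 := eprod_pt2 hφ hpd (fun x => chi S x * chi T x) (fun x => chi S x * chi T x)
    rw [E1_chi_mul] at h3
    rw [pow_two, ← h3]
    congr 1
    funext X
    ring
  -- shared-index value
  have hshare : ∀ p ∈ P, ∀ q ∈ P, q ≠ p →
      (q.1 = p.1 ∨ q.1 = p.2 ∨ q.2 = p.1 ∨ q.2 = p.2) → e p q = W := by
    intro p hp q hq hqp hsh
    have hp' := hp
    rw [hPdef] at hp'
    have hq' := hq
    rw [hPdef] at hq'
    have hplt : p.1 < p.2 := (Finset.mem_filter.1 hp').2
    have hqlt : q.1 < q.2 := (Finset.mem_filter.1 hq').2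
    simp only [he, hW]
    refine Finset.sum_congr rfl fun S _ => Finset.sum_congr rfl fun T _ => ?_
    rcases hsh with h | h | h | h
    · have hab : p.1 ≠ p.2 := ne_of_lt hplt
      have hac : p.1 ≠ q.2 := by rw [← h]; exact ne_of_lt hqlt
      have hbc : p.2 ≠ q.2 := by
        intro hcon
        exact hqp (Prod.ext_iff.2 ⟨h, hcon.symm⟩)
      have h3 := eprod_pt3 hφ hab hac hbc (fun x => chi S x * chi T x) (chi S) (chi T)
      rw [E1_chi_mul, E1_chi, E1_chi] at h3
      rw [← h3]
      congr 1
      funext X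
      rw [h]
      ring
    · have hab : p.2 ≠ p.1 := (ne_of_lt hplt).symm
      have hac : p.2 ≠ q.2 := by rw [← h]; exact ne_of_lt hqlt
      have hq2 : p.2 < q.2 := by rw [← h]; exact hqlt
      have hbc : p.1 ≠ q.2 := ne_of_lt (lt_trans hplt hq2)
      have h3 := eprod_pt3 hφ hab hac hbc (fun x => chi S x * chi T x) (chi S) (chi T)
      rw [E1_chi_mul, E1_chi, E1_chi] at h3
      rw [← h3]
      congr 1
      funext X
      rw [h]
      ring
    · have hab : p.1 ≠ p.2 := ne_of_lt hplt
      have hq1 : q.1 < p.1 := by rw [← h]; exact hqlt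
      have hac : p.1 ≠ q.1 := (ne_of_lt hq1).symm
      have hbc : p.2 ≠ q.1 := (ne_of_lt (lt_trans hq1 hplt)).symm
      have h3 := eprod_pt3 hφ hab hac hbc (fun x => chi S x * chi T x) (chi S) (chi T)
      rw [E1_chi_mul, E1_chi, E1_chi] at h3
      rw [← h3]
      congr 1
      funext X
      rw [h]
      ring
    · have hab : p.2 ≠ p.1 := (ne_of_lt hplt).symm
      have hq1 : q.1 < p.2 := by rw [← h]; exact hqlt
      have hac : p.2 ≠ q.1 := (ne_of_lt hq1).symm
      have hbc : p.1 ≠ q.1 := by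
        intro hcon
        exact hqp (Prod.ext_iff.2 ⟨hcon.symm, h⟩)
      have h3 := eprod_pt3 hφ hab hac hbc (fun x => chi S x * chi T x) (chi S) (chi T)
      rw [E1_chi_mul, E1_chi, E1_chi] at h3
      rw [← h3]
      congr 1
      funext X
      rw [h]
      ring
  -- disjoint value
  have hfar : ∀ p ∈ P, ∀ q ∈ P,
      ¬(q.1 = p.1 ∨ q.1 = p.2 ∨ q.2 = p.1 ∨ q.2 = p.2) → e p q = μ ^ 2 := by
    intro p hp q hq hsh
    push_neg at hsh
    obtain ⟨h11, h12, h21, h22⟩ := hsh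
    have hp' := hp
    rw [hPdef] at hp'
    have hq' := hq
    rw [hPdef] at hq'
    have hplt : p.1 < p.2 := (Finset.mem_filter.1 hp').2
    have hqlt : q.1 < q.2 := (Finset.mem_filter.1 hq').2
    have hab : p.1 ≠ p.2 := ne_of_lt hplt
    have hac : p.1 ≠ q.1 := h11.symm
    have had : p.1 ≠ q.2 := h21.symm
    have hbc : p.2 ≠ q.1 := h12.symm
    have hbd : p.2 ≠ q.2 := h22.symm
    have hcd : q.1 ≠ q.2 := ne_of_lt hqlt
    simp only [he]
    have hsplit : μ ^ 2 = ∑ S ∈ ls, ∑ T ∈ ls, coeff φ S ^ 2 * coeff φ T ^ 2 := by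
      rw [pow_two, hμ, Finset.sum_mul_sum]
    rw [hsplit]
    refine Finset.sum_congr rfl fun S _ => Finset.sum_congr rfl fun T _ => ?_
    have h4 := eprod_pt4 hφ hab hac had hbc hbd hcd (chi S) (chi S) (chi T) (chi T)
    rw [E1_chi, E1_chi] at h4
    calc eprod φ m (fun X => chi S (X p.1) * chi S (X p.2) *
            (chi T (X q.1) * chi T (X q.2)))
        = eprod φ m (fun X => chi S (X p.1) *
            (chi S (X p.2) * (chi T (X q.1) * chi T (X q.2)))) := by
          congr 1
          funext X
          ring
      _ = coeff φ S * (coeff φ S * (coeff φ T * coeff φ T)) := h4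
      _ = coeff φ S ^ 2 * coeff φ T ^ 2 := by ring
  -- Cauchy-Schwarz
  have hWle : W ≤ Real.sqrt L * μ := by
    have hCS := Finset.sum_mul_sq_le_sq_mul_sq (ls ×ˢ ls)
      (fun r => coeff φ (symmDiff r.1 r.2)) (fun r => coeff φ r.1 * coeff φ r.2)
    have e1 : ∑ r ∈ ls ×ˢ ls, coeff φ (symmDiff r.1 r.2) * (coeff φ r.1 * coeff φ r.2)
        = W := by
      rw [hW, Finset.sum_product]
    have e2 : ∑ r ∈ ls ×ˢ ls, coeff φ (symmDiff r.1 r.2) ^ 2 = L := by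
      rw [hL, Finset.sum_product]
    have e3 : ∑ r ∈ ls ×ˢ ls, (coeff φ r.1 * coeff φ r.2) ^ 2 = μ ^ 2 := by
      rw [Finset.sum_product, pow_two, hμ, Finset.sum_mul_sum]
      refine Finset.sum_congr rfl fun S _ => Finset.sum_congr rfl fun T _ => ?_
      show (coeff φ S * coeff φ T) ^ 2 = coeff φ S ^ 2 * coeff φ T ^ 2
      exact mul_pow _ _ 2
    rw [e1, e2, e3] at hCS
    calc W ≤ |W| := le_abs_self W
      _ = Real.sqrt (W ^ 2) := (Real.sqrt_sq_eq_abs W).symm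
      _ ≤ Real.sqrt (L * μ ^ 2) := Real.sqrt_le_sqrt hCS
      _ = Real.sqrt L * μ := by rw [Real.sqrt_mul hL0, Real.sqrt_sq hμ0]
  -- row bound
  have hrow : ∀ p ∈ P, ∑ q ∈ P, (e p q - μ ^ 2)
      ≤ L + 2 * (M - 1) * (Real.sqrt L * μ) := by
    intro p hp
    have hp' := hp
    rw [hPdef] at hp'
    have hplt : p.1 < p.2 := (Finset.mem_filter.1 hp').2
    rw [← Finset.add_sum_erase P _ hp]
    have h1 : e p p - μ ^ 2 ≤ L := by
      rw [hdiag p hp]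
      nlinarith [sq_nonneg μ]
    have h2 : ∑ q ∈ P.erase p, (e p q - μ ^ 2) ≤ 2 * (M - 1) * (Real.sqrt L * μ) := by
      have hbnd : ∀ q ∈ P.erase p, e p q - μ ^ 2
          ≤ if q.1 = p.1 ∨ q.1 = p.2 ∨ q.2 = p.1 ∨ q.2 = p.2
            then Real.sqrt L * μ else 0 := by
        intro q hq
        have hqP : q ∈ P := Finset.mem_of_mem_erase hq
        have hqp : q ≠ p := Finset.ne_of_mem_erase hq
        by_cases hsh : q.1 = p.1 ∨ q.1 = p.2 ∨ q.2 = p.1 ∨ q.2 = p.2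
        · rw [if_pos hsh, hshare p hp q hqP hqp hsh]
          nlinarith [sq_nonneg μ, hWle]
        · rw [if_neg hsh, hfar p hp q hqP hsh]
          simp
      calc ∑ q ∈ P.erase p, (e p q - μ ^ 2)
          ≤ ∑ q ∈ P.erase p, (if q.1 = p.1 ∨ q.1 = p.2 ∨ q.2 = p.1 ∨ q.2 = p.2
              then Real.sqrt L * μ else 0) := Finset.sum_le_sum hbnd
        _ = (((P.erase p).filter
              (fun q => q.1 = p.1 ∨ q.1 = p.2 ∨ q.2 = p.1 ∨ q.2 = p.2)).card : ℝ)
              * (Real.sqrt L * μ) := by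
            rw [Finset.sum_ite, Finset.sum_const, Finset.sum_const_zero, add_zero,
              nsmul_eq_mul]
        _ ≤ 2 * (M - 1) * (Real.sqrt L * μ) := by
            refine mul_le_mul_of_nonneg_right ?_ hSQ0
            have hcn := card_neighbors p hplt
            rw [← hPdef] at hcn
            calc (((P.erase p).filter
                  (fun q => q.1 = p.1 ∨ q.1 = p.2 ∨ q.2 = p.1 ∨ q.2 = p.2)).card : ℝ)
                ≤ ((2 * (m - 1) : ℕ) : ℝ) := by exact_mod_cast hcn
              _ = 2 * (M - 1) := by
                  push_cast [Nat.cast_sub (by omega : 1 ≤ m)]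
                  rw [hM]
    linarith
  -- assembling the variance formula
  have hmain : eprod φ m (fun X => (Delta n k m X) ^ 2) - (eprod φ m (Delta n k m)) ^ 2
      = (∑ p ∈ P, ∑ q ∈ P, (e p q - μ ^ 2)) / c ^ 2 := by
    rw [hsq2, hED]
    have hsplit : ∑ p ∈ P, ∑ q ∈ P, (e p q - μ ^ 2)
        = (∑ p ∈ P, ∑ q ∈ P, e p q) - (P.card : ℝ) * ((P.card : ℝ) * μ ^ 2) := by
      simp only [Finset.sum_sub_distrib, Finset.sum_const, nsmul_eq_mul]
    rw [hsplit, hcard, sub_div]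
    congr 1
    have hxx : c * (c * μ ^ 2) = μ ^ 2 * c ^ 2 := by ring
    rw [hxx, mul_div_assoc, div_self (pow_ne_zero 2 (ne_of_gt hcpos)), mul_one]
  rw [hmain]
  have hsum : ∑ p ∈ P, ∑ q ∈ P, (e p q - μ ^ 2)
      ≤ c * (L + 2 * (M - 1) * (Real.sqrt L * μ)) := by
    calc ∑ p ∈ P, ∑ q ∈ P, (e p q - μ ^ 2)
        ≤ ∑ _p ∈ P, (L + 2 * (M - 1) * (Real.sqrt L * μ)) := Finset.sum_le_sum hrow
      _ = (P.card : ℝ) * (L + 2 * (M - 1) * (Real.sqrt L * μ)) := by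
          rw [Finset.sum_const, nsmul_eq_mul]
      _ = c * (L + 2 * (M - 1) * (Real.sqrt L * μ)) := by rw [hcard]
  calc (∑ p ∈ P, ∑ q ∈ P, (e p q - μ ^ 2)) / c ^ 2
      ≤ (c * (L + 2 * (M - 1) * (Real.sqrt L * μ))) / c ^ 2 := by gcongr
    _ = (L + 2 * (M - 1) * (Real.sqrt L * μ)) / c := by
        rw [pow_two, mul_div_mul_left _ _ (ne_of_gt hcpos)]
    _ ≤ 4 / M ^ 2 * L + 4 / M * Real.sqrt L * μ := by
        rw [hcval, div_le_iff₀ (by nlinarith : (0:ℝ) < M * (M - 1) / 2)]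
        have hexp : (4 / M ^ 2 * L + 4 / M * Real.sqrt L * μ) * (M * (M - 1) / 2)
            = 2 * (M - 1) / M * L + 2 * (M - 1) * (Real.sqrt L * μ) := by
          field_simp
          ring
        rw [hexp]
        have h1M : 1 ≤ 2 * (M - 1) / M := by
          rw [le_div_iff₀ hMpos]
          linarith
        have := mul_le_mul_of_nonneg_right h1M hL0
        linarith
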